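/- Let R be a commutative reduced local ring. Then R is Hopfian if and only if the polynomial ring R[x] is Hopfian. -/

import Mathlib

open Polynomial

private lemma reduced_unit_eq_C {R : Type*} [CommRing R] [IsReduced R] {p : R[X]}
    (hp : IsUnit p) : p = C (p.coeff 0) := by
  obtain ⟨h0, hn⟩ := Polynomial.isUnit_iff_coeff_isUnit_isNilpotent.mp hp
  ext n
  cases n with
  | zero => simp
  | succ n =>
    rw [coeff_C_succ]
    exact isNilpotent_iff_eq_zero.mp (hn _ n.succ_ne_zero)

private lemma eq_zero_of_forall_prime {R : Type*} [CommRing R] [IsReduced R] {x : R}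
    (h : ∀ p : Ideal R, p.IsPrime → x ∈ p) : x = 0 :=
  isNilpotent_iff_eq_zero.mp (nilpotent_iff_mem_prime.mpr h)

open Polynomial in
theorem stmt_19 {R : Type*} [CommRing R] [IsReduced R] [IsLocalRing R] :
    (∀ g : R →+* R, Function.Surjective g → Function.Bijective g) ↔
    (∀ f : R[X] →+* R[X], Function.Surjective f → Function.Bijective f) := by
  constructor
  · -- hard direction: R Hopfian → R[X] Hopfian
    intro hR f hf
    set h : R[X] := f X with hhdef
    -- f sends constants to constants
    have hCC : ∀ r : R, f (C r) = C ((f (C r)).coeff 0) := by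
      intro r
      rcases IsLocalRing.isUnit_or_isUnit_one_sub_self r with hr | hr
      · exact reduced_unit_eq_C ((hr.map C).map f)
      · have e2 := reduced_unit_eq_C ((hr.map C).map f)
        have e1 : f (C (1 - r)) = 1 - f (C r) := by
          rw [map_sub, map_sub, map_one, map_one]
        set c := (f (C (1 - r))).coeff 0 with hc
        have e3 : f (C r) = C (1 - c) := by
          rw [e1] at e2
          rw [map_sub, map_one]
          linear_combination -e2
        rw [e3, coeff_C_zero]
    -- the induced endomorphism of R
    let gh : R →+* R :=
      { toFun := fun r => (f (C r)).coeff 0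
        map_one' := by
          show (f (C 1)).coeff 0 = 1
          rw [C_1, map_one]; simp
        map_zero' := by
          show (f (C 0)).coeff 0 = 0
          rw [C_0, map_zero]; simp
        map_mul' := fun r s => by
          show (f (C (r * s))).coeff 0 = (f (C r)).coeff 0 * (f (C s)).coeff 0
          rw [C_mul, map_mul, hCC r, hCC s, ← C_mul, coeff_C_zero]; simp
        map_add' := fun r s => by
          show (f (C (r + s))).coeff 0 = (f (C r)).coeff 0 + (f (C s)).coeff 0
          rw [C_add, map_add, hCC r, hCC s, ← C_add, coeff_C_zero]; simp }
    have hfC : ∀ r : R, f (C r) = C (gh r) := hCC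
    -- f p = (p.map gh).comp h
    have hF : ∀ p : R[X], f p = (p.map gh).comp h := by
      have hext : f = (eval₂RingHom (C : R →+* R[X]) h).comp (mapRingHom gh) := by
        apply ringHom_ext
        · intro a
          simp [hfC a, coe_eval₂RingHom, coe_mapRingHom]
        · simp [coe_eval₂RingHom, coe_mapRingHom, hhdef]
      intro p
      rw [hext]
      simp only [RingHom.comp_apply, coe_mapRingHom, coe_eval₂RingHom]
      rfl
    -- a preimage of X
    obtain ⟨q, hq⟩ := hf X
    set w : R[X] := q.map gh with hwdef
    have hw : w.comp h = X := by rw [← hF]; exact hq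
    -- the key facts, prime by prime
    have key : ∀ (p : Ideal R), p.IsPrime →
        ((∀ j, 2 ≤ j → h.coeff j ∈ p) ∧ (w.coeff 1 * h.coeff 1 - 1 ∈ p)) := by
      intro p hp
      haveI := hp
      set mk := Ideal.Quotient.mk p with hmk
      have hw' : (w.map mk).comp (h.map mk) = X := by
        rw [← Polynomial.map_comp, hw, map_X]
      set w' := w.map mk with hw'def
      set h' := h.map mk with hh'def
      have hdeg : w'.natDegree * h'.natDegree = 1 := by
        rw [← natDegree_comp, hw', natDegree_X]
      have hdw : w'.natDegree = 1 := Nat.eq_one_of_mul_eq_one_right hdeg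
      have hdh : h'.natDegree = 1 := Nat.eq_one_of_mul_eq_one_left hdeg
      constructor
      · intro j hj
        have : h'.coeff j = 0 := by
          apply coeff_eq_zero_of_natDegree_lt
          omega
        rw [hh'def, coeff_map] at this
        exact Ideal.Quotient.eq_zero_iff_mem.mp this
      · have hdle : w'.degree ≤ 1 := by
          rw [← Nat.cast_one (R := WithBot ℕ), ← natDegree_le_iff_degree_le]
          omega
        have e2 : (C (w'.coeff 1) * X + C (w'.coeff 0)).comp h' = X := by
          rw [← eq_X_add_C_of_degree_le_one hdle]; exact hw'
        rw [add_comp, mul_comp, C_comp, C_comp, X_comp] at e2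
        have e3 := congrArg (fun P : (R ⧸ p)[X] => P.coeff 1) e2
        simp only [coeff_add, coeff_C_mul, coeff_C, coeff_X_one, if_neg one_ne_zero,
          add_zero] at e3
        -- e3 : w'.coeff 1 * h'.coeff 1 = 1
        apply Ideal.Quotient.eq_zero_iff_mem.mp
        rw [map_sub, map_mul, map_one, sub_eq_zero]
        simpa only [hw'def, hh'def, hwdef, coeff_map] using e3
    -- globalize via reducedness
    have hj : ∀ j, 2 ≤ j → h.coeff j = 0 := fun j hjj =>
      eq_zero_of_forall_prime (fun p hp => (key p hp).1 j hjj)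
    have hu1 : w.coeff 1 * h.coeff 1 = 1 :=
      sub_eq_zero.mp (eq_zero_of_forall_prime fun p hp => (key p hp).2)
    have hunit : IsUnit (h.coeff 1) :=
      isUnit_iff_exists_inv.mpr ⟨_, by rw [mul_comm]; exact hu1⟩
    set u : Rˣ := hunit.unit with hudef
    have hu : (u : R) = h.coeff 1 := hunit.unit_spec
    have hhle : h.degree ≤ 1 := by
      rw [← Nat.cast_one (R := WithBot ℕ), ← natDegree_le_iff_degree_le,
        natDegree_le_iff_coeff_eq_zero]
      intro N hN
      exact hj N (by omega)
    have hh : h = C (h.coeff 1) * X + C (h.coeff 0) := eq_X_add_C_of_degree_le_one hhle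
    set t : R[X] := C ((u⁻¹ : Rˣ) : R) * (X - C (h.coeff 0)) with htdef
    have hcomp : h.comp t = X := by
      conv_lhs => rw [hh]
      rw [add_comp, mul_comp, C_comp, C_comp, X_comp, htdef]
      rw [← mul_assoc, ← C_mul]
      have huu : h.coeff 1 * ((u⁻¹ : Rˣ) : R) = 1 := by
        rw [← hu]; exact u.mul_inv
      rw [huu, C_1, one_mul]
      ring
    have hcancel : ∀ p : R[X], (p.comp h).comp t = p := fun p => by
      rw [comp_assoc, hcomp, comp_X]
    -- gh is surjective
    have ghsurj : Function.Surjective gh := by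
      intro r
      obtain ⟨p, hp⟩ := hf (C r)
      have e0 : (p.map gh).comp h = C r := by rw [← hF]; exact hp
      have e : p.map gh = C r := by
        have e1 := congrArg (fun z : R[X] => z.comp t) e0
        simpa only [hcancel, C_comp] using e1
      refine ⟨p.coeff 0, ?_⟩
      have e2 := congrArg (fun z : R[X] => z.coeff 0) e
      simpa only [coeff_map, coeff_C_zero] using e2
    have ghbij := hR gh ghsurj
    refine ⟨?_, hf⟩
    intro a b hab
    rw [hF a, hF b] at hab
    have h1 : a.map gh = b.map gh := by
      have e1 := congrArg (fun z : R[X] => z.comp t) hab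
      simpa only [hcancel] using e1
    exact Polynomial.map_injective gh ghbij.1 h1
  · -- easy direction
    intro hP g hg
    have hb := hP (mapRingHom g) (Polynomial.map_surjective g hg)
    refine ⟨fun a b hab => ?_, hg⟩
    have e : (mapRingHom g) (C a) = (mapRingHom g) (C b) := by
      simp only [coe_mapRingHom, map_C, hab]
    have := hb.1 e
    exact C_inj.mp this
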